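/- Let K be an algebraically closed field and F = K(x). Let S be a K-subspace of F with dim_K S = n and K(S) = F, and let (e_1, …, e_n) be a super filtered basis of S with respect to v_∞, with natural filtration S_i = span_K(e_1, …, e_i) and combinatorial genii γ_i. Suppose γ_n ≥ 1, let t be the least index with γ_t ≥ 1, and assume t ≥ 4 and e_i = x^{i−1} for all 1 ≤ i ≤ t − 1. For 1 ≤ i ≤ n set M_i = Σ_{α ∈ K} max(0, −v_α(e_i)), and for 2 ≤ i ≤ n set Δ_i = deg(e_i) − deg(e_{i−1}) and μ_i = M_i − M_{i−1}. If t > Δ_j + μ_j for all 2 ≤ j ≤ n, then for every i with t − 1 ≤ i ≤ n one has L(T_i) ⊆ S_i², where T_i is the divisor with T_i(P_∞) = D_i(P_∞) + t − 2 and T_i(P_α) = D_i(P_α) for all α ∈ K. -/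

import Mathlib

open Polynomial

noncomputable section

namespace FFF

variable {K : Type*} [Field K] [IsAlgClosed K]

/-- Valuation of a rational function at the finite place `x - α`
(order of vanishing at `x - α`). -/
def vA (α : K) (f : RatFunc K) : ℤ :=
  (Polynomial.rootMultiplicity α f.num : ℤ) - (Polynomial.rootMultiplicity α f.denom : ℤ)

/-- Valuation of a rational function at the place at infinity:
`deg (denominator) - deg (numerator)`. -/
def vInf (f : RatFunc K) : ℤ := -f.intDegree

/-- The places of `K(x)`: `some α` is the finite place at `α ∈ K`, `none` is the
place at infinity; `plval p` is the associated valuation. -/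
def plval (p : Option K) (f : RatFunc K) : ℤ :=
  Option.elim p (vInf f) (fun α => vA α f)

/-- The degree of a rational function, `deg f = -v∞(f)`. -/
def fdeg (f : RatFunc K) : ℤ := f.intDegree

/-- A divisor on `K(x)`: an integer for every place, zero for all but finitely many. -/
abbrev Divisor (K : Type*) [Field K] := Option K →₀ ℤ

/-- The degree of a divisor: the sum of its values. -/
def divDeg (D : Divisor K) : ℤ := D.sum fun _ n => n

/-- The Riemann–Roch space `L(D)` of a divisor `D`. -/
def RRset (D : Divisor K) : Set (RatFunc K) :=
  {f | f = 0 ∨ ∀ p : Option K, -(D p) ≤ plval p f}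

/-- The subfield `K(T)` of `K(x)` generated by the constants `K` and a set `T`. -/
def Kgen (T : Set (RatFunc K)) : Subfield (RatFunc K) :=
  Subfield.closure ((Set.range fun a : K => (RatFunc.C a : RatFunc K)) ∪ T)

/-- The combinatorial genus `γ = dim S² - 2 dim S + 1` of a subspace `S`. -/
def cgenus (S : Submodule K (RatFunc K)) : ℤ :=
  (Module.finrank K ↥(S * S) : ℤ) - 2 * (Module.finrank K ↥S : ℤ) + 1

/-- `sfil e i` is the `i`-th step (1-indexed) of the natural filtration attached to a
filtered basis `e`: the span of the first `i` basis vectors. -/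
def sfil {n : ℕ} (e : Fin n → RatFunc K) (i : ℕ) : Submodule K (RatFunc K) :=
  Submodule.span K (e '' {j | (j : ℕ) < i})

/-- `e` is a filtered basis of `S` with respect to the valuation `v`:
a basis of `S` with strictly decreasing valuations. -/
def IsFilteredBasis {n : ℕ} (v : RatFunc K → ℤ) (S : Submodule K (RatFunc K))
    (e : Fin n → RatFunc K) : Prop :=
  LinearIndependent K e ∧ Submodule.span K (Set.range e) = S ∧
    StrictAnti fun i => v (e i)

/-- `D` is the divisor of least degree with `S ⊆ L(D)`, i.e.
`D(P) = -min {v_P s : s ∈ S, s ≠ 0}` for every place `P`. -/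
def IsMinDivisor (S : Submodule K (RatFunc K)) (D : Divisor K) : Prop :=
  ∀ p : Option K, IsLeast {d : ℤ | ∃ s ∈ S, s ≠ 0 ∧ plval p s = d} (-(D p))


abbrev φK (K : Type*) [Field K] : K[X] →+* RatFunc K := algebraMap K[X] (RatFunc K)

lemma cross_mul {p q : K[X]} (hq : q ≠ 0) {f : RatFunc K}
    (hf : f = φK K p / φK K q) : f.num * q = p * f.denom :=
  (RatFunc.num_mul_eq_mul_denom_iff hq).mpr hf

lemma vA_div (α : K) {p q : K[X]} (hp : p ≠ 0) (hq : q ≠ 0) {f : RatFunc K}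
    (hf : f = φK K p / φK K q) :
    vA α f = (rootMultiplicity α p : ℤ) - rootMultiplicity α q := by
  have hf0 : f ≠ 0 := by
    rw [hf]
    exact div_ne_zero (RatFunc.algebraMap_ne_zero hp) (RatFunc.algebraMap_ne_zero hq)
  have h := cross_mul hq hf
  have h1 : rootMultiplicity α (f.num * q) = rootMultiplicity α (p * f.denom) := by rw [h]
  rw [Polynomial.rootMultiplicity_mul (mul_ne_zero (RatFunc.num_ne_zero hf0) hq),
    Polynomial.rootMultiplicity_mul (mul_ne_zero hp f.denom_ne_zero)] at h1
  unfold vA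
  omega

lemma intDegree_div' {p q : K[X]} (hp : p ≠ 0) (hq : q ≠ 0) {f : RatFunc K}
    (hf : f = φK K p / φK K q) :
    f.intDegree = (p.natDegree : ℤ) - q.natDegree := by
  have hf0 : f ≠ 0 := by
    rw [hf]
    exact div_ne_zero (RatFunc.algebraMap_ne_zero hp) (RatFunc.algebraMap_ne_zero hq)
  have h := cross_mul hq hf
  have h1 : (f.num * q).natDegree = (p * f.denom).natDegree := by rw [h]
  rw [Polynomial.natDegree_mul (RatFunc.num_ne_zero hf0) hq,
    Polynomial.natDegree_mul hp f.denom_ne_zero] at h1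
  unfold RatFunc.intDegree
  omega

lemma rm_num_denom {f : RatFunc K} (α : K) :
    rootMultiplicity α f.num = 0 ∨ rootMultiplicity α f.denom = 0 := by
  by_contra hcon
  push_neg at hcon
  obtain ⟨h1, h2⟩ := hcon
  have d1 : (X - C α) ∣ f.num := by
    have := Polynomial.pow_rootMultiplicity_dvd f.num α
    exact dvd_trans (dvd_pow_self _ h1) this
  have d2 : (X - C α) ∣ f.denom := by
    have := Polynomial.pow_rootMultiplicity_dvd f.denom α
    exact dvd_trans (dvd_pow_self _ h2) this
  exact Polynomial.not_isUnit_X_sub_C α ((RatFunc.isCoprime_num_denom f).isUnit_of_dvd' d1 d2)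

lemma max_vA_eq {f : RatFunc K} (hf : f ≠ 0) (α : K) :
    max 0 (-(vA α f)) = (rootMultiplicity α f.denom : ℤ) := by
  unfold vA
  rcases rm_num_denom (f := f) α with h | h <;> simp [h] <;> omega

lemma finsum_max_vA {f : RatFunc K} (hf : f ≠ 0) :
    ∑ᶠ α : K, max 0 (-(vA α f)) = (f.denom.natDegree : ℤ) := by
  have h1 : ∑ᶠ α : K, max 0 (-(vA α f)) = ∑ᶠ α : K, (rootMultiplicity α f.denom : ℤ) :=
    finsum_congr fun α => max_vA_eq hf α
  rw [h1]
  classical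
  have hsupp : (Function.support fun α : K => (rootMultiplicity α f.denom : ℤ)) ⊆
      ↑f.denom.roots.toFinset := by
    intro α hα
    rw [Function.mem_support] at hα
    have hα' : rootMultiplicity α f.denom ≠ 0 := by
      intro h0; apply hα; rw [h0]; norm_num
    rw [Finset.mem_coe, Multiset.mem_toFinset, Polynomial.mem_roots f.denom_ne_zero]
    exact (Polynomial.rootMultiplicity_pos f.denom_ne_zero).mp (Nat.pos_of_ne_zero hα')
  rw [finsum_eq_sum_of_support_subset _ hsupp]
  have : ∀ α ∈ f.denom.roots.toFinset, (rootMultiplicity α f.denom : ℤ)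
      = (f.denom.roots.count α : ℤ) := by
    intro α _
    rw [Polynomial.count_roots]
  rw [Finset.sum_congr rfl this, ← Nat.cast_sum, Multiset.toFinset_sum_count_eq]
  congr 1
  exact (Polynomial.splits_iff_card_roots.mp (IsAlgClosed.splits f.denom))

lemma dvd_of_rm_le {p q : K[X]} (hp : p ≠ 0) (hq : q ≠ 0)
    (h : ∀ α : K, rootMultiplicity α p ≤ rootMultiplicity α q) : p ∣ q := by
  apply Polynomial.Splits.dvd_of_roots_le_roots (IsAlgClosed.splits p) hp
  classical
  rw [Multiset.le_iff_count]
  intro α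
  rw [Polynomial.count_roots, Polynomial.count_roots]
  exact h α


lemma natDegree_rem_lt {h g : K[X]} (hg1 : 1 ≤ g.natDegree)
    (hm : (g * C (g.leadingCoeff)⁻¹).Monic) :
    (h %ₘ (g * C (g.leadingCoeff)⁻¹)).natDegree + 1 ≤ g.natDegree := by
  set g' := g * C (g.leadingCoeff)⁻¹ with hg'
  have hgne : g ≠ 0 := by
    intro h0; rw [h0] at hg1; simp at hg1
  have hdeg : g'.degree = g.degree := degree_mul_leadingCoeff_inv g hgne
  have hlt : (h %ₘ g').degree < g'.degree := degree_modByMonic_lt h hm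
  rcases eq_or_ne (h %ₘ g') 0 with h0 | h0
  · rw [h0]; simpa using hg1
  · have := Polynomial.natDegree_lt_natDegree h0 (hdeg ▸ hlt)
    omega

/-- Key polynomial decomposition lemma (Bezout with degree bounds). -/
lemma poly_decomp (g r h : K[X]) (hg : g ≠ 0) (hg1 : 1 ≤ g.natDegree) (hr : r ≠ 0)
    (hco : IsCoprime r g) (c E : ℕ) (hrE : r.natDegree ≤ E) (hEc : E ≤ c + 1)
    (hh : h.natDegree ≤ g.natDegree + c) :
    ∃ a b : K[X], h = r * a + g * b ∧ b.natDegree ≤ c ∧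
      (a = 0 ∨ r.natDegree + a.natDegree + 1 ≤ g.natDegree + E) := by
  have hm : (g * C (g.leadingCoeff)⁻¹).Monic := monic_mul_leadingCoeff_inv hg
  set g' := g * C (g.leadingCoeff)⁻¹ with hg'
  set q := h /ₘ g' with hqdef
  set rem := h %ₘ g' with hremdef
  have hsplit : h = g' * q + rem := by
    rw [hqdef, hremdef]
    have := modByMonic_add_div h g'
    linear_combination -this
  have hremlt : rem.natDegree + 1 ≤ g.natDegree := natDegree_rem_lt hg1 hm
  have hqdeg : q.natDegree ≤ c := by
    have h1 : q.natDegree = h.natDegree - g'.natDegree := natDegree_divByMonic h hm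
    have h2 : g'.natDegree = g.natDegree := by
      have hgne := hg
      have : g'.degree = g.degree := degree_mul_leadingCoeff_inv g hgne
      exact natDegree_eq_of_degree_eq this
    omega
  rcases Nat.eq_zero_or_pos r.natDegree with hr0 | hr1
  · -- r is a nonzero constant
    obtain ⟨k, hk⟩ : ∃ k : K, r = C k := ⟨r.coeff 0, Polynomial.eq_C_of_natDegree_eq_zero hr0⟩
    have hkne : k ≠ 0 := by rintro rfl; simp at hk; exact hr hk
    refine ⟨C k⁻¹ * rem, C (g.leadingCoeff)⁻¹ * q, ?_, ?_, ?_⟩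
    · rw [hk]
      rw [hsplit, hg']
      have hck : C k * C k⁻¹ = 1 := by rw [← C_mul, mul_inv_cancel₀ hkne, C_1]
      calc g * C g.leadingCoeff⁻¹ * q + rem
          = g * C g.leadingCoeff⁻¹ * q + rem * (C k * C k⁻¹) := by rw [hck]; ring
        _ = C k * (C k⁻¹ * rem) + g * (C g.leadingCoeff⁻¹ * q) := by ring
    · calc (C (g.leadingCoeff)⁻¹ * q).natDegree ≤ 0 + q.natDegree :=
            natDegree_mul_le.trans (by simp [natDegree_C])
        _ ≤ c := by omega
    · rcases eq_or_ne rem 0 with h0 | h0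
      · left; rw [h0, mul_zero]
      · right
        have : (C k⁻¹ * rem).natDegree ≤ rem.natDegree :=
          natDegree_mul_le.trans (by simp [natDegree_C])
        omega
  · -- r nonconstant
    have hE1 : 1 ≤ E := le_trans hr1 hrE
    have hmr : (r * C (r.leadingCoeff)⁻¹).Monic := monic_mul_leadingCoeff_inv hr
    set r' := r * C (r.leadingCoeff)⁻¹ with hr'
    obtain ⟨u, v, huv⟩ := hco
    set w := (rem * v) %ₘ r' with hwdef
    have hwdeg : w.natDegree + 1 ≤ E := by
      have := natDegree_rem_lt (h := rem * v) (g := r) hr1 hmr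
      rw [← hwdef] at this
      omega
    have hqw : rem * v = r' * ((rem * v) /ₘ r') + w := by
      have := modByMonic_add_div (rem * v) r'
      linear_combination -this
    have key : rem - g * w = r * (rem * u) + g * (r' * ((rem * v) /ₘ r')) := by
      linear_combination -rem * huv + g * hqw
    have ha : rem - g * w = r * (rem * u + g * C (r.leadingCoeff)⁻¹ * ((rem * v) /ₘ r')) := by
      rw [key, hr']; ring
    set a := rem * u + g * C (r.leadingCoeff)⁻¹ * ((rem * v) /ₘ r') with hadef
    refine ⟨a, w + C (g.leadingCoeff)⁻¹ * q, ?_, ?_, ?_⟩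
    · have : g * (C (g.leadingCoeff)⁻¹ * q) = g' * q := by rw [hg']; ring
      calc h = g' * q + rem := hsplit
        _ = r * a + g * (w + C (g.leadingCoeff)⁻¹ * q) := by
            rw [← ha, ← this]; ring
    · have h1 : (C (g.leadingCoeff)⁻¹ * q).natDegree ≤ q.natDegree :=
        natDegree_mul_le.trans (by simp [natDegree_C])
      have := natDegree_add_le w (C (g.leadingCoeff)⁻¹ * q)
      omega
    · rcases eq_or_ne a 0 with h0 | h0
      · left; exact h0
      · right
        have hra : (r * a).natDegree = r.natDegree + a.natDegree :=
          natDegree_mul hr h0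
        have h2 : (r * a).natDegree ≤ g.natDegree + E - 1 := by
          rw [← ha]
          have h3 := Polynomial.natDegree_sub_le rem (g * w)
          have h4 : (g * w).natDegree ≤ g.natDegree + w.natDegree := natDegree_mul_le
          omega
        omega

omit [IsAlgClosed K] in
lemma smul_φ (c : K) (y : RatFunc K) : c • y = φK K (C c) * y := by
  rw [Algebra.smul_def, IsScalarTower.algebraMap_apply K K[X] (RatFunc K)]
  rfl

omit [IsAlgClosed K] in
/-- Polynomials of degree at most `m` are in a submodule containing the powers `X^k`. -/
lemma poly_mem_of_powers {W : Submodule K (RatFunc K)} {m : ℕ}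
    (hW : ∀ k, k ≤ m → ((RatFunc.X : RatFunc K) ^ k) ∈ W)
    {h : K[X]} (hh : h.natDegree ≤ m) : φK K h ∈ W := by
  have hrepr : h = ∑ i ∈ Finset.range (m+1), Polynomial.monomial i (h.coeff i) :=
    Polynomial.as_sum_range' h (m+1) (Nat.lt_succ_of_le hh)
  rw [hrepr, map_sum]
  apply Submodule.sum_mem
  intro k hk
  rw [Finset.mem_range] at hk
  have : φK K (Polynomial.monomial k (h.coeff k)) = (h.coeff k) • (RatFunc.X : RatFunc K) ^ k := by
    rw [← Polynomial.C_mul_X_pow_eq_monomial, map_mul, map_pow, RatFunc.algebraMap_X,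
      smul_φ]
  rw [this]
  exact Submodule.smul_mem _ _ (hW k (by omega))

/-- The minimum of `vA α` over the basis is a least element for `vA α` on the span. -/
lemma isLeast_span (n : ℕ) (hn : 0 < n) (e : Fin n → RatFunc K)
    (hlin : LinearIndependent K e) (α : K) :
    IsLeast {d : ℤ | ∃ s ∈ Submodule.span K (Set.range e), s ≠ 0 ∧ vA α s = d}
      (Finset.univ.inf' (Finset.univ_nonempty_iff.mpr ⟨⟨0, hn⟩⟩) (fun j => vA α (e j))) := by
  classical
  have hne : ∀ j, e j ≠ 0 := fun j => hlin.ne_zero j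
  constructor
  · obtain ⟨j₀, _, hj₀⟩ := Finset.exists_mem_eq_inf'
      (Finset.univ_nonempty_iff.mpr ⟨⟨0, hn⟩⟩) (fun j => vA α (e j))
    exact ⟨e j₀, Submodule.subset_span (Set.mem_range_self j₀), hne j₀, hj₀.symm⟩
  · rintro d ⟨s, hsS, hs0, rfl⟩
    obtain ⟨c, hc⟩ := (Submodule.mem_span_range_iff_exists_fun K).mp hsS
    set Q : K[X] := ∏ j, (e j).denom with hQdef
    have hQne : Q ≠ 0 := Finset.prod_ne_zero_iff.mpr fun j _ => (e j).denom_ne_zero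
    set P : K[X] := ∑ j, C (c j) * ((e j).num * ∏ k ∈ Finset.univ.erase j, (e k).denom)
      with hPdef
    have hterm : ∀ j : Fin n, e j * φK K Q =
        φK K ((e j).num * ∏ k ∈ Finset.univ.erase j, (e k).denom) := by
      intro j
      have hQs : Q = (e j).denom * ∏ k ∈ Finset.univ.erase j, (e k).denom :=
        (Finset.mul_prod_erase Finset.univ _ (Finset.mem_univ j)).symm
      have hd : φK K (e j).denom ≠ 0 := RatFunc.algebraMap_ne_zero (e j).denom_ne_zero
      have hjj : e j * φK K (e j).denom = φK K (e j).num := by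
        calc e j * φK K (e j).denom
            = (φK K (e j).num / φK K (e j).denom) * φK K (e j).denom := by
              rw [RatFunc.num_div_denom]
          _ = φK K (e j).num := div_mul_cancel₀ _ hd
      rw [hQs, map_mul, ← mul_assoc, hjj, map_mul]
    have hPQ : φK K P = s * φK K Q := by
      rw [hPdef, map_sum, ← hc, Finset.sum_mul]
      apply Finset.sum_congr rfl
      intro j _
      rw [map_mul, ← hterm j, smul_mul_assoc, smul_φ]
    have hPne : P ≠ 0 := by
      intro h0
      apply hs0
      have : s * φK K Q = 0 := by rw [← hPQ, h0, map_zero]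
      rcases mul_eq_zero.mp this with h | h
      · exact h
      · exact absurd h (RatFunc.algebraMap_ne_zero hQne)
    have hsrep : s = φK K P / φK K Q := by
      rw [hPQ, mul_div_assoc, div_self (RatFunc.algebraMap_ne_zero hQne), mul_one]
    rw [vA_div α hPne hQne hsrep]
    -- now bound rootMultiplicity α P from below
    set m : ℤ := Finset.univ.inf' (Finset.univ_nonempty_iff.mpr ⟨⟨0, hn⟩⟩)
      (fun j => vA α (e j)) with hmdef
    have hterm_rm : ∀ j : Fin n,
        (rootMultiplicity α ((e j).num * ∏ k ∈ Finset.univ.erase j, (e k).denom) : ℤ)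
          = vA α (e j) + rootMultiplicity α Q := by
      intro j
      have hQs : Q = (e j).denom * ∏ k ∈ Finset.univ.erase j, (e k).denom :=
        (Finset.mul_prod_erase Finset.univ _ (Finset.mem_univ j)).symm
      have hprodne : (∏ k ∈ Finset.univ.erase j, (e k).denom) ≠ 0 :=
        Finset.prod_ne_zero_iff.mpr fun k _ => (e k).denom_ne_zero
      have h1 : rootMultiplicity α Q = rootMultiplicity α (e j).denom +
          rootMultiplicity α (∏ k ∈ Finset.univ.erase j, (e k).denom) := by
        rw [hQs, Polynomial.rootMultiplicity_mul (mul_ne_zero (e j).denom_ne_zero hprodne)]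
      rw [Polynomial.rootMultiplicity_mul (mul_ne_zero (RatFunc.num_ne_zero (hne j)) hprodne)]
      unfold vA
      omega
    have hNnonneg : 0 ≤ m + rootMultiplicity α Q := by
      obtain ⟨j₀, _, hj₀⟩ := Finset.exists_mem_eq_inf'
        (Finset.univ_nonempty_iff.mpr ⟨⟨0, hn⟩⟩) (fun j => vA α (e j))
      rw [hmdef, hj₀]
      have := hterm_rm j₀
      have h0 : (0:ℤ) ≤ rootMultiplicity α ((e j₀).num * ∏ k ∈ Finset.univ.erase j₀, (e k).denom) := by positivity
      omega
    set N : ℕ := (m + rootMultiplicity α Q).toNat with hNdef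
    have hdvd : (X - C α) ^ N ∣ P := by
      rw [hPdef]
      apply Finset.dvd_sum
      intro j _
      rcases eq_or_ne (c j) 0 with h0 | h0
      · rw [h0]; simp
      · apply Dvd.dvd.mul_left
        have h1 : N ≤ rootMultiplicity α ((e j).num * ∏ k ∈ Finset.univ.erase j, (e k).denom) := by
          have h2 := hterm_rm j
          have h3 : m ≤ vA α (e j) := Finset.inf'_le _ (Finset.mem_univ j)
          omega
        exact dvd_trans (pow_dvd_pow _ h1) (Polynomial.pow_rootMultiplicity_dvd _ α)
    have hrmP : N ≤ rootMultiplicity α P := (Polynomial.le_rootMultiplicity_iff hPne).mpr hdvd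
    have : (N : ℤ) = m + rootMultiplicity α Q := Int.toNat_of_nonneg hNnonneg
    omega


omit [IsAlgClosed K] in
/-- Every element of `sfil e i` can be written with denominator `(e jt).denom`,
with numerator degree at most `(e jt).num.natDegree`. -/
lemma sfil_rep {n : ℕ} (e : Fin n → RatFunc K) (i : ℕ) (jt : Fin n)
    (hne : ∀ j : Fin n, e j ≠ 0)
    (hmono : ∀ j : Fin n, (j : ℕ) < i → (e j).denom ∣ (e jt).denom)
    (hdeg : ∀ j : Fin n, (j : ℕ) < i → (e j).intDegree ≤ (e jt).intDegree)
    {s : RatFunc K} (hs : s ∈ sfil e i) :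
    ∃ p : K[X], φK K p = s * φK K ((e jt).denom) ∧
      p.natDegree ≤ (e jt).num.natDegree := by
  let W : Submodule K (RatFunc K) :=
    { carrier := {s | ∃ p : K[X], φK K p = s * φK K ((e jt).denom) ∧ p.natDegree ≤ (e jt).num.natDegree}
      add_mem' := by
        rintro a b ⟨p1, h1, d1⟩ ⟨p2, h2, d2⟩
        exact ⟨p1 + p2, by rw [map_add, h1, h2, add_mul],
          le_trans (natDegree_add_le _ _) (by omega)⟩
      zero_mem' := ⟨0, by simp, by simp⟩
      smul_mem' := by
        rintro c a ⟨p, h1, d1⟩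
        refine ⟨C c * p, ?_, ?_⟩
        · rw [map_mul, h1, smul_φ, mul_assoc]
        · refine le_trans natDegree_mul_le ?_
          simp [natDegree_C]
          omega }
  have hsub : sfil e i ≤ W := by
    rw [sfil, Submodule.span_le]
    rintro _ ⟨j, hj, rfl⟩
    have hj' : (j : ℕ) < i := hj
    obtain ⟨cof, hcof⟩ := hmono j hj'
    have hdj : (e j).denom ≠ 0 := (e j).denom_ne_zero
    have hq0 : (e jt).denom ≠ 0 := (e jt).denom_ne_zero
    have hcof0 : cof ≠ 0 := by
      intro h0; rw [h0, mul_zero] at hcof; exact hq0 hcof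
    have hjj : e j * φK K (e j).denom = φK K (e j).num := by
      calc e j * φK K (e j).denom
          = (φK K (e j).num / φK K (e j).denom) * φK K (e j).denom := by
            rw [RatFunc.num_div_denom]
        _ = φK K (e j).num :=
            div_mul_cancel₀ _ (RatFunc.algebraMap_ne_zero hdj)
    refine ⟨(e j).num * cof, ?_, ?_⟩
    · rw [map_mul, ← hjj, hcof, map_mul, ← mul_assoc]
    · have h1 : ((e j).num * cof).natDegree = (e j).num.natDegree + cof.natDegree :=
        natDegree_mul (RatFunc.num_ne_zero (hne j)) hcof0
      have h2 : (e jt).denom.natDegree = (e j).denom.natDegree + cof.natDegree := by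
        rw [hcof]; exact natDegree_mul hdj hcof0
      have h3 := hdeg j hj'
      unfold RatFunc.intDegree at h3
      omega
  obtain ⟨p, h1, h2⟩ := hsub hs
  exact ⟨p, h1, h2⟩


/-- Let `e` be a super filtered basis of `S` w.r.t. `v∞`, `γₙ ≥ 1`, `t`
the least index with `γ_t ≥ 1`, `t ≥ 4` and `e_i = x^(i-1)` for `i ≤ t - 1`. With
`M_i` the number of finite poles of `e_i`, `Δ_i, μ_i` the jumps of degrees and of `M`,
if `t > Δ_j + μ_j` for all `2 ≤ j ≤ n`, then `L(T_i) ⊆ S_i²` for all `t - 1 ≤ i ≤ n`,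
where `T_i` agrees with the minimal divisor `D_i` at the finite places and
`T_i(P∞) = D_i(P∞) + t - 2`. -/
theorem statement19 (n : ℕ) (S : Submodule K (RatFunc K))
    (hdim : Module.finrank K ↥S = n)
    (hgen : Kgen (S : Set (RatFunc K)) = ⊤)
    (e : Fin n → RatFunc K)
    (hlin : LinearIndependent K e)
    (hspan : Submodule.span K (Set.range e) = S)
    (hanti : StrictAnti fun i => vInf (e i))
    (hsuper : ∀ α : K, ∀ m : ℤ,
      IsLeast {d : ℤ | ∃ s ∈ S, s ≠ 0 ∧ vA α s = d} m → m < 0 →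
        (∀ i j : Fin n, i ≤ j → vA α (e j) ≤ vA α (e i)) ∧
        ∀ j : Fin n, (j : ℕ) + 1 = n → vA α (e j) = m)
    (hgn : 1 ≤ cgenus (sfil e n))
    (t : ℕ)
    (ht : IsLeast {i : ℕ | 1 ≤ i ∧ i ≤ n ∧ 1 ≤ cgenus (sfil e i)} t)
    (ht4 : 4 ≤ t)
    (hx : ∀ j : Fin n, (j : ℕ) + 2 ≤ t → e j = RatFunc.X ^ (j : ℕ))
    (D : ℕ → Divisor K)
    (hD : ∀ i : ℕ, 1 ≤ i → i ≤ n → IsMinDivisor (sfil e i) (D i))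
    (hkey : ∀ j k : Fin n, (k : ℕ) + 1 = (j : ℕ) →
      (fdeg (e j) - fdeg (e k)) +
        ((∑ᶠ α : K, max 0 (-(vA α (e j)))) - ∑ᶠ α : K, max 0 (-(vA α (e k)))) < (t : ℤ)) :
    ∀ i : ℕ, t - 1 ≤ i → i ≤ n → ∀ T : Divisor K,
      T none = D i none + (t : ℤ) - 2 → (∀ α : K, T (some α) = D i (some α)) →
      RRset T ⊆ ((sfil e i * sfil e i : Submodule K (RatFunc K)) : Set (RatFunc K)) := by
  classical
  obtain ⟨⟨ht1, htn, -⟩, -⟩ := ht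
  have hn0 : 0 < n := by omega
  have hne : ∀ j : Fin n, e j ≠ 0 := fun j => hlin.ne_zero j
  -- denominators form a divisibility chain
  have hchain : ∀ j k : Fin n, j ≤ k → (e j).denom ∣ (e k).denom := by
    intro j k hjk
    apply dvd_of_rm_le (e j).denom_ne_zero (e k).denom_ne_zero
    intro α
    rcases Nat.eq_zero_or_pos (rootMultiplicity α (e j).denom) with h0 | hpos
    · omega
    · have hj0 : rootMultiplicity α (e j).num = 0 := by
        rcases rm_num_denom (f := e j) α with h | h
        · exact h
        · omega
      have hleast := isLeast_span n hn0 e hlin α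
      rw [hspan] at hleast
      have hm1 : (Finset.univ.inf' (Finset.univ_nonempty_iff.mpr ⟨⟨0, hn0⟩⟩)
          fun j => vA α (e j)) ≤ vA α (e j) := Finset.inf'_le _ (Finset.mem_univ j)
      have hvj : vA α (e j) < 0 := by
        unfold vA; omega
      have hmono := (hsuper α _ hleast (lt_of_le_of_lt hm1 hvj)).1 j k hjk
      unfold vA at hmono
      omega
  -- degrees are monotone
  have hdegmono : ∀ j k : Fin n, j ≤ k → (e j).intDegree ≤ (e k).intDegree := by
    intro j k hjk
    have h1 : vInf (e k) ≤ vInf (e j) := hanti.antitone hjk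
    unfold vInf at h1
    omega
  have he0 : (e ⟨0, hn0⟩).intDegree = 0 := by
    have h1 := hx ⟨0, hn0⟩ (by simp only [Fin.val_mk]; omega)
    simp only [Fin.val_mk, pow_zero] at h1
    rw [h1]
    exact RatFunc.intDegree_one
  have hdnonneg : ∀ j : Fin n, 0 ≤ (e j).intDegree := by
    intro j
    have := hdegmono ⟨0, hn0⟩ j (by simp [Fin.le_def])
    omega
  -- powers of X belong to the filtration
  have hxmem : ∀ (i' k : ℕ), k + 2 ≤ t → k < i' → (RatFunc.X : RatFunc K) ^ k ∈ sfil e i' := by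
    intro i' k hk hki
    have hkn : k < n := by omega
    have h1 := hx ⟨k, hkn⟩ (by simpa using hk)
    rw [← h1]
    exact Submodule.subset_span ⟨⟨k, hkn⟩, by simpa using hki, rfl⟩
  have hXk : ∀ k : ℕ, (RatFunc.X : RatFunc K) ^ k = φK K (X ^ k) := by
    intro k; rw [map_pow, RatFunc.algebraMap_X]
  -- the key induction
  have Key : ∀ i : ℕ, t - 1 ≤ i → ∀ (_ : i ≤ n) (him : i - 1 < n) (h : K[X]),
      h.natDegree ≤ (e ⟨i-1, him⟩).num.natDegree + (t-2) →
      φK K h / φK K ((e ⟨i-1, him⟩).denom) ∈ (sfil e i * sfil e i : Submodule K (RatFunc K)) := by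
    intro i hi
    induction i, hi using Nat.le_induction with
    | base =>
      intro hin him h hdeg
      have het : e ⟨t-1-1, him⟩ = φK K (X ^ (t-1-1)) := by
        rw [← hXk]
        exact hx _ (by simp only [Fin.val_mk]; omega)
      rw [het, RatFunc.denom_algebraMap, map_one, div_one]
      rw [het, RatFunc.num_algebraMap, natDegree_X_pow] at hdeg
      apply poly_mem_of_powers (m := (t-1-1) + (t-2)) ?_ hdeg
      intro k hk
      have hsplitk : k = min k (t-2) + (k - min k (t-2)) := by omega
      have h1 : (RatFunc.X : RatFunc K) ^ (min k (t-2)) ∈ sfil e (t-1) :=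
        hxmem _ _ (by omega) (by omega)
      have h2 : (RatFunc.X : RatFunc K) ^ (k - min k (t-2)) ∈ sfil e (t-1) :=
        hxmem _ _ (by omega) (by omega)
      have hXsplit : (RatFunc.X : RatFunc K) ^ k
          = (RatFunc.X : RatFunc K) ^ (min k (t-2)) * (RatFunc.X : RatFunc K) ^ (k - min k (t-2)) := by
        rw [← pow_add, ← hsplitk]
      rw [hXsplit]
      exact Submodule.mul_mem_mul h1 h2
    | succ i hti IH =>
      intro hin him h hdeg
      have hiin : i ≤ n := by omega
      have hip : i - 1 < n := by omega
      set jt : Fin n := ⟨i+1-1, him⟩ with hjtdef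
      set jp : Fin n := ⟨i-1, hip⟩ with hjpdef
      have hjtval : (jt : ℕ) = i := rfl
      have hjpval : (jp : ℕ) = i - 1 := rfl
      have hjple : jp ≤ jt := by
        rw [Fin.le_def, hjtval, hjpval]; omega
      have hjplt : jp < jt := by
        rw [Fin.lt_def, hjtval, hjpval]; omega
      -- divisibility and the cofactor r
      obtain ⟨r, hqr⟩ := hchain jp jt hjple
      have hq'ne : (e jp).denom ≠ 0 := (e jp).denom_ne_zero
      have hqne : (e jt).denom ≠ 0 := (e jt).denom_ne_zero
      have hgne : (e jt).num ≠ 0 := RatFunc.num_ne_zero (hne jt)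
      have hrne : r ≠ 0 := by
        intro h0; rw [h0, mul_zero] at hqr; exact hqne hqr
      have hco : IsCoprime r (e jt).num := by
        have h1 : IsCoprime (e jt).denom (e jt).num := (RatFunc.isCoprime_num_denom (e jt)).symm
        exact h1.of_isCoprime_of_dvd_left ⟨(e jp).denom, by rw [hqr]; ring⟩
      -- numerics
      have hDd : (e jt).denom.natDegree = (e jp).denom.natDegree + r.natDegree := by
        rw [hqr]; exact natDegree_mul hq'ne hrne
      have hkey1 := hkey jt jp (by rw [hjtval, hjpval]; omega)
      rw [show fdeg (e jt) = (e jt).intDegree from rfl,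
        show fdeg (e jp) = (e jp).intDegree from rfl,
        finsum_max_vA (hne jt), finsum_max_vA (hne jp)] at hkey1
      have hint_t : (e jt).intDegree = ((e jt).num.natDegree : ℤ) - (e jt).denom.natDegree := rfl
      have hint_p : (e jp).intDegree = ((e jp).num.natDegree : ℤ) - (e jp).denom.natDegree := rfl
      have hstrict : (e jp).intDegree + 1 ≤ (e jt).intDegree := by
        have h1 : vInf (e jt) < vInf (e jp) := hanti hjplt
        unfold vInf at h1
        omega
      have hp0 : 0 ≤ (e jp).intDegree := hdnonneg jp
      -- choose E
      set Δ : ℕ := ((e jt).intDegree - (e jp).intDegree).toNat with hΔdef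
      have hΔcast : (Δ : ℤ) = (e jt).intDegree - (e jp).intDegree :=
        Int.toNat_of_nonneg (by omega)
      set E : ℕ := t - 1 - Δ with hEdef
      have hμΔ : (r.natDegree : ℤ) + Δ < t := by omega
      have hrE : r.natDegree ≤ E := by omega
      have hEc : E ≤ (t-2) + 1 := by omega
      have hg1 : 1 ≤ (e jt).num.natDegree := by omega
      obtain ⟨a, b, hab, hbdeg, hao⟩ := poly_decomp (e jt).num r h hgne hg1 hrne hco
        (t-2) E hrE hEc hdeg
      -- split the fraction
      have hφrne : φK K r ≠ 0 := RatFunc.algebraMap_ne_zero hrne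
      have hsplit : φK K h / φK K ((e jt).denom)
          = φK K a / φK K ((e jp).denom) + e jt * φK K b := by
        rw [hab, map_add, add_div, map_mul, map_mul]
        congr 1
        · rw [hqr, map_mul, mul_comm (φK K (e jp).denom) (φK K r),
            mul_div_mul_left _ _ hφrne]
        · rw [mul_comm (φK K (e jt).num) (φK K b), mul_div_assoc,
            RatFunc.num_div_denom, mul_comm]
      rw [hsplit]
      apply Submodule.add_mem
      · -- first summand: use IH
        rcases hao with rfl | hao
        · simp only [map_zero, zero_div]
          exact Submodule.zero_mem _
        · have hadeg : a.natDegree ≤ (e jp).num.natDegree + (t-2) := by omega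
          have h1 := IH hiin hip a hadeg
          have hmono2 : sfil e i ≤ sfil e (i+1) :=
            Submodule.span_mono (Set.image_mono (fun j hj => by
              simp only [Set.mem_setOf_eq] at hj ⊢; omega))
          exact mul_le_mul' hmono2 hmono2 h1
      · -- second summand
        have h1 : e jt ∈ sfil e (i+1) :=
          Submodule.subset_span ⟨jt, by simp only [Set.mem_setOf_eq, hjtval]; omega, rfl⟩
        have h2 : φK K b ∈ sfil e (i+1) := by
          apply poly_mem_of_powers (m := t-2) ?_ hbdeg
          intro k hk
          exact hxmem _ _ (by omega) (by omega)
        exact Submodule.mul_mem_mul h1 h2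
  -- final assembly
  intro i hi1 hi2 T hT1 hT2 f hf
  simp only [RRset, Set.mem_setOf_eq] at hf
  rcases hf with rfl | hfv
  · simp only [SetLike.mem_coe]
    exact Submodule.zero_mem _
  · simp only [SetLike.mem_coe]
    by_cases hf0 : f = 0
    · rw [hf0]; exact Submodule.zero_mem _
    have him : i - 1 < n := by omega
    set jt : Fin n := ⟨i-1, him⟩ with hjtdef
    have hjtval : (jt : ℕ) = i - 1 := rfl
    have hDi := hD i (by omega) hi2
    have hmono' : ∀ j : Fin n, (j:ℕ) < i → (e j).denom ∣ (e jt).denom := by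
      intro j hj
      exact hchain j jt (by rw [Fin.le_def, hjtval]; omega)
    have hdeg' : ∀ j : Fin n, (j:ℕ) < i → (e j).intDegree ≤ (e jt).intDegree := by
      intro j hj
      exact hdegmono j jt (by rw [Fin.le_def, hjtval]; omega)
    have hqtne : (e jt).denom ≠ 0 := (e jt).denom_ne_zero
    have hDα : ∀ α : K, D i (some α) ≤ (rootMultiplicity α (e jt).denom : ℤ) := by
      intro α
      obtain ⟨⟨s₀, hs₀, hs₀0, hs₀v⟩, -⟩ := hDi (some α)
      obtain ⟨p, hp1, hp2⟩ := sfil_rep e i jt hne hmono' hdeg' hs₀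
      have hpne : p ≠ 0 := by
        intro h0
        rw [h0, map_zero] at hp1
        rcases mul_eq_zero.mp hp1.symm with h | h
        · exact hs₀0 h
        · exact RatFunc.algebraMap_ne_zero hqtne h
      have hsrep : s₀ = φK K p / φK K (e jt).denom := by
        rw [hp1, mul_div_assoc, div_self (RatFunc.algebraMap_ne_zero hqtne), mul_one]
      have hv := vA_div α hpne hqtne hsrep
      have heq : plval (some α) s₀ = vA α s₀ := rfl
      rw [heq, hv] at hs₀v
      have h0 : (0:ℤ) ≤ (rootMultiplicity α p : ℤ) := by positivity
      omega
    have hDnone : D i none ≤ (e jt).intDegree := by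
      obtain ⟨⟨s₁, hs₁, hs₁0, hs₁v⟩, -⟩ := hDi none
      obtain ⟨p, hp1, hp2⟩ := sfil_rep e i jt hne hmono' hdeg' hs₁
      have hpne : p ≠ 0 := by
        intro h0
        rw [h0, map_zero] at hp1
        rcases mul_eq_zero.mp hp1.symm with h | h
        · exact hs₁0 h
        · exact RatFunc.algebraMap_ne_zero hqtne h
      have hsrep : s₁ = φK K p / φK K (e jt).denom := by
        rw [hp1, mul_div_assoc, div_self (RatFunc.algebraMap_ne_zero hqtne), mul_one]
      have hv := intDegree_div' hpne hqtne hsrep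
      have heq : plval none s₁ = vInf s₁ := rfl
      rw [heq] at hs₁v
      unfold vInf at hs₁v
      rw [hv] at hs₁v
      have hintt : (e jt).intDegree = ((e jt).num.natDegree:ℤ) - (e jt).denom.natDegree := rfl
      omega
    have hdvd : f.denom ∣ (e jt).denom := by
      apply dvd_of_rm_le f.denom_ne_zero hqtne
      intro α
      have h1 := hfv (some α)
      rw [hT2 α] at h1
      have h2 : plval (some α) f = vA α f := rfl
      rw [h2] at h1
      have h3 := hDα α
      rcases Nat.eq_zero_or_pos (rootMultiplicity α f.denom) with h0 | hpos
      · omega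
      · have h4 : rootMultiplicity α f.num = 0 := by
          rcases rm_num_denom (f := f) α with h | h
          · exact h
          · omega
        unfold vA at h1
        omega
    obtain ⟨cof, hcof⟩ := hdvd
    have hcofne : cof ≠ 0 := by
      intro h0; rw [h0, mul_zero] at hcof; exact hqtne hcof
    have hfnum : f.num ≠ 0 := RatFunc.num_ne_zero hf0
    have hfrep : f = φK K (f.num * cof) / φK K (e jt).denom := by
      rw [hcof, map_mul, map_mul,
        mul_div_mul_right _ _ (RatFunc.algebraMap_ne_zero hcofne), RatFunc.num_div_denom]
    have h4 := hfv none
    rw [hT1] at h4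
    have h5 : plval none f = vInf f := rfl
    rw [h5] at h4
    unfold vInf at h4
    have hintf : f.intDegree = (f.num.natDegree:ℤ) - f.denom.natDegree := rfl
    have hintt : (e jt).intDegree = ((e jt).num.natDegree:ℤ) - (e jt).denom.natDegree := rfl
    have hcofdeg : (e jt).denom.natDegree = f.denom.natDegree + cof.natDegree := by
      rw [hcof]; exact natDegree_mul f.denom_ne_zero hcofne
    have hhdeg : (f.num * cof).natDegree = f.num.natDegree + cof.natDegree :=
      natDegree_mul hfnum hcofne
    have hbound : (f.num * cof).natDegree ≤ (e jt).num.natDegree + (t-2) := by omega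
    rw [hfrep]
    exact Key i hi1 hi2 him (f.num * cof) hbound

end FFF
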